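/- For pairwise disjoint measurable sets B_1,...,B_N and nonnegative integers d_1,...,d_N with d_1+...+d_N = n, integrating the tensor product of indicator functions 1_{B_1}^{⊗d_1} ⊗ ... ⊗ 1_{B_N}^{⊗d_N} against the n-th factorial measure η^(n) of a finite counting measure η yields the product of falling factorials (η(B_1))_{d_1} ⋯ (η(B_N))_{d_N}. -/

import Mathlib

attribute [local instance] Classical.propDecidable

/-- For pairwise disjoint measurable sets `B 1, …, B N` and nonnegative integers
`d j` with `∑ d j = n`, integrating the tensor product `1_{B 1}^{⊗ d 1} ⊗ ⋯ ⊗ 1_{B N}^{⊗ d N}`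
(encoded via an assignment `c : Fin n → Fin N` of coordinates to blocks, the `j`-th block having
`d j` coordinates) against the `n`-th factorial measure of the finite counting measure
`η = δ_{x 0} + ⋯ + δ_{x (m-1)}` yields the product of falling factorials
`(η (B 1))_{d 1} ⋯ (η (B N))_{d N}`. -/
theorem stmt1 {E : Type*} [MeasurableSpace E] {m n N : ℕ}
    (x : Fin m → E) (B : Fin N → Set E)
    (hmeas : ∀ j, MeasurableSet (B j))
    (hdisj : Pairwise (fun i j => Disjoint (B i) (B j)))
    (d : Fin N → ℕ) (hsum : ∑ j, d j = n)
    (c : Fin n → Fin N) (hc : ∀ j, (Finset.univ.filter (fun k => c k = j)).card = d j) :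
    ∑ i ∈ Finset.univ.filter (fun i : Fin n → Fin m => Function.Injective i),
        ∏ k : Fin n, (if x (i k) ∈ B (c k) then (1 : ℝ) else 0)
      = ∏ j : Fin N,
          (((Finset.univ.filter (fun l : Fin m => x l ∈ B j)).card).descFactorial (d j) : ℝ) := by
  classical
  have key : ∀ (y : E) (j j' : Fin N), y ∈ B j → y ∈ B j' → j = j' := by
    intro y j j' h h'
    by_contra hne
    exact Set.disjoint_left.mp (hdisj hne) h h'
  have e : {i : Fin n → Fin m // Function.Injective i ∧ ∀ k, x (i k) ∈ B (c k)} ≃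
      ∀ j : Fin N, ({k : Fin n // c k = j} ↪ {l : Fin m // x l ∈ B j}) := by
    refine ⟨fun i j => ⟨fun k => ⟨i.1 k.1, by obtain ⟨a, ha⟩ := k; subst ha; exact i.2.2 a⟩,
        fun k k' h => Subtype.ext (i.2.1 (congrArg Subtype.val h))⟩,
      fun f => ⟨fun k => (f (c k) ⟨k, rfl⟩).1, ?_, fun k => (f (c k) ⟨k, rfl⟩).2⟩,
      fun i => Subtype.ext rfl, ?_⟩
    · intro k k' h
      dsimp at h
      have gen : ∀ (j j' : Fin N) (hjj' : j = j') (a : Fin n) (ha : c a = j),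
          ((f j ⟨a, ha⟩).1) = (f j' ⟨a, ha.trans hjj'⟩).1 := by
        rintro j j' rfl a ha; rfl
      have hck : c k = c k' :=
        key (x ((f (c k) ⟨k, rfl⟩).1)) _ _ (f (c k) ⟨k, rfl⟩).2
          (by rw [h]; exact (f (c k') ⟨k', rfl⟩).2)
      have hb : ((f (c k') ⟨k', rfl⟩).1) = (f (c k) ⟨k', hck.symm⟩).1 :=
        gen (c k') (c k) hck.symm k' rfl
      have := (f (c k)).injective (Subtype.ext (h.trans hb))
      exact congrArg Subtype.val this
    · intro f
      funext j
      apply DFunLike.ext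
      rintro ⟨k, hk⟩
      subst hk
      rfl
  have hcard : Fintype.card {i : Fin n → Fin m // Function.Injective i ∧ ∀ k, x (i k) ∈ B (c k)}
      = ∏ j : Fin N, ((Finset.univ.filter (fun l : Fin m => x l ∈ B j)).card).descFactorial (d j) := by
    rw [Fintype.card_congr e, Fintype.card_pi]
    refine Finset.prod_congr rfl fun j _ => ?_
    rw [Fintype.card_embedding_eq, Fintype.card_subtype, Fintype.card_subtype, hc j]
  calc ∑ i ∈ Finset.univ.filter (fun i : Fin n → Fin m => Function.Injective i),
        ∏ k : Fin n, (if x (i k) ∈ B (c k) then (1 : ℝ) else 0)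
      = ∑ i ∈ Finset.univ.filter (fun i : Fin n → Fin m => Function.Injective i),
        (if ∀ k ∈ Finset.univ, x (i k) ∈ B (c k) then (1 : ℝ) else 0) := by
        refine Finset.sum_congr rfl fun i _ => ?_
        simp [Finset.prod_boole]
    _ = (((Finset.univ.filter (fun i : Fin n → Fin m => Function.Injective i)).filter
          (fun i => ∀ k ∈ Finset.univ, x (i k) ∈ B (c k))).card : ℝ) := by
        rw [Finset.sum_boole]
    _ = ((Fintype.card {i : Fin n → Fin m // Function.Injective i ∧ ∀ k, x (i k) ∈ B (c k)}) : ℝ) := by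
        rw [Finset.filter_filter, Fintype.card_subtype]
        norm_num
    _ = _ := by rw [hcard]; push_cast; rfl
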